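/- Let L ≥ 1 and let W(θ) := ∑_{ℓ=1}^L a_ℓ cos(ℓθ) with a₁ > a₂ > ⋯ > a_L > 0. Let κ > 2/a_L and suppose r > 0 satisfies the fixed-point equation r = I₁(κ a_L r)/I₀(κ a_L r). Define π(θ) := exp(κ a_L r cos(Lθ)) / I₀(κ a_L r). Then π is a strictly positive, even, 2π-periodic, continuously differentiable function with (1/2π)∫₀^{2π} π(θ)dθ = 1, and π solves the stationary McKean–Vlasov equation: π′(θ) = κ (W⋆π)′(θ) π(θ) for all θ ∈ ℝ. In particular π is a nontrivial 'Kuramoto-type' stationary solution. -/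

import Mathlib

open scoped BigOperators
open Filter Topology Real

noncomputable section

def besselI (n : ℕ) (x : ℝ) : ℝ :=
  (1 / (2 * π)) * ∫ φ in (0:ℝ)..(2 * π), Real.exp (x * Real.cos φ) * Real.cos ((n : ℝ) * φ)

def Wfin (L : ℕ) (a : ℕ → ℝ) (θ : ℝ) : ℝ :=
  ∑ ℓ ∈ Finset.Icc 1 L, a ℓ * Real.cos ((ℓ : ℝ) * θ)

def circConv (W p : ℝ → ℝ) (θ : ℝ) : ℝ :=
  (1 / (2 * π)) * ∫ φ in (0:ℝ)..(2 * π), W (θ - φ) * p φ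

lemma besselI_zero_pos (x : ℝ) : 0 < besselI 0 x := by
  unfold besselI
  apply mul_pos (by positivity)
  apply intervalIntegral.intervalIntegral_pos_of_pos
    ((by fun_prop : Continuous fun φ : ℝ =>
      Real.exp (x * Real.cos φ) * Real.cos (((0:ℕ) : ℝ) * φ)).intervalIntegrable _ _)
    _ Real.two_pi_pos
  intro φ
  simp [Real.exp_pos]

lemma integral_comp_nat_mul {f : ℝ → ℝ} (hf : Continuous f)
    (hper : Function.Periodic f (2 * π)) {L : ℕ} (hL : 1 ≤ L) :
    ∫ φ in (0:ℝ)..(2 * π), f ((L : ℝ) * φ) = ∫ φ in (0:ℝ)..(2 * π), f φ := by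
  have hL0 : (L : ℝ) ≠ 0 := Nat.cast_ne_zero.2 (by omega)
  have h_int : ∀ t₁ t₂ : ℝ, IntervalIntegrable f MeasureTheory.volume t₁ t₂ :=
    fun t₁ t₂ => hf.intervalIntegrable _ _
  have key : (∫ x in (0:ℝ)..((L : ℝ) * (2 * π)), f x)
      = (L : ℝ) * ∫ x in (0:ℝ)..(2 * π), f x := by
    have h := hper.intervalIntegral_add_zsmul_eq (L : ℤ) 0 h_int
    simpa using h
  rw [intervalIntegral.integral_comp_mul_left f hL0, mul_zero, key, smul_eq_mul,
    inv_mul_cancel_left₀ hL0]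

lemma integral_sin_mul_exp (c : ℝ) (L ℓ : ℕ) :
    ∫ φ in (0:ℝ)..(2 * π),
      Real.sin ((ℓ : ℝ) * φ) * Real.exp (c * Real.cos ((L : ℝ) * φ)) = 0 := by
  set g : ℝ → ℝ := fun φ => Real.sin ((ℓ : ℝ) * φ) * Real.exp (c * Real.cos ((L : ℝ) * φ))
    with hg
  have hper : Function.Periodic g (2 * π) := by
    intro x
    simp only [hg, show ((ℓ : ℝ) * (x + 2*π)) = (ℓ:ℝ)*x + (ℓ:ℝ)*(2*π) by ring,
      show ((L : ℝ) * (x + 2*π)) = (L:ℝ)*x + (L:ℝ)*(2*π) by ring,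
      Real.sin_add_nat_mul_two_pi, Real.cos_add_nat_mul_two_pi]
  have hodd : ∀ x, g (-x) = - g x := by
    intro x
    simp [hg, mul_neg]
  have h1 : (∫ φ in (0:ℝ)..(2*π), g φ) = ∫ φ in (-π)..π, g φ := by
    have h := hper.intervalIntegral_add_eq 0 (-π)
    rw [zero_add, show -π + 2*π = π by ring] at h
    exact h
  have h3 : (∫ x in (-π:ℝ)..π, g (-x)) = ∫ x in (-π:ℝ)..π, g x := by
    simpa using intervalIntegral.integral_comp_neg (a := -π) (b := π) g
  have h4 : (∫ x in (-π:ℝ)..π, g (-x)) = - ∫ x in (-π:ℝ)..π, g x := by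
    simp only [hodd]
    exact intervalIntegral.integral_neg
  have h5 : (∫ x in (-π:ℝ)..π, g x) = 0 := by linarith [h3.symm.trans h4]
  rw [h1, h5]

lemma integral_cos_mul_exp_eq_zero (c : ℝ) {L ℓ : ℕ} (h1 : 1 ≤ ℓ) (h2 : ℓ < L) :
    ∫ φ in (0:ℝ)..(2 * π),
      Real.cos ((ℓ : ℝ) * φ) * Real.exp (c * Real.cos ((L : ℝ) * φ)) = 0 := by
  have hL0 : (L : ℝ) ≠ 0 := Nat.cast_ne_zero.2 (by omega)
  set t : ℝ := 2 * π / L with ht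
  set g : ℝ → ℝ := fun φ => Real.cos ((ℓ : ℝ) * φ) * Real.exp (c * Real.cos ((L : ℝ) * φ))
    with hg
  have hper : Function.Periodic g (2 * π) := by
    intro x
    simp only [hg, show ((ℓ : ℝ) * (x + 2*π)) = (ℓ:ℝ)*x + (ℓ:ℝ)*(2*π) by ring,
      show ((L : ℝ) * (x + 2*π)) = (L:ℝ)*x + (L:ℝ)*(2*π) by ring,
      Real.cos_add_nat_mul_two_pi]
  -- shift identity
  have hLt : (L : ℝ) * t = 2 * π := by
    rw [ht]; field_simp
  have hshift : (∫ φ in (0:ℝ)..(2*π), g φ) = ∫ φ in (0:ℝ)..(2*π), g (φ + t) := by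
    rw [intervalIntegral.integral_comp_add_right g t]
    have h := hper.intervalIntegral_add_eq 0 (0 + t)
    rw [zero_add] at h
    rw [h, show (0:ℝ) + t + 2*π = 2*π + t by ring]
  have hval : ∀ φ : ℝ, g (φ + t) =
      Real.cos ((ℓ:ℝ)*t) * (Real.cos ((ℓ:ℝ)*φ) * Real.exp (c * Real.cos ((L:ℝ)*φ)))
      - Real.sin ((ℓ:ℝ)*t) * (Real.sin ((ℓ:ℝ)*φ) * Real.exp (c * Real.cos ((L:ℝ)*φ))) := by
    intro φ
    have hcosL : Real.cos ((L:ℝ)*(φ + t)) = Real.cos ((L:ℝ)*φ) := by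
      rw [mul_add, hLt, Real.cos_add_two_pi]
    simp only [hg]
    rw [hcosL, show (ℓ:ℝ)*(φ+t) = (ℓ:ℝ)*φ + (ℓ:ℝ)*t by ring, Real.cos_add]
    ring
  have hiC : IntervalIntegrable
      (fun φ => Real.cos ((ℓ:ℝ)*φ) * Real.exp (c * Real.cos ((L:ℝ)*φ)))
      MeasureTheory.volume 0 (2*π) := (by fun_prop : Continuous _).intervalIntegrable _ _
  have hiS : IntervalIntegrable
      (fun φ => Real.sin ((ℓ:ℝ)*φ) * Real.exp (c * Real.cos ((L:ℝ)*φ)))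
      MeasureTheory.volume 0 (2*π) := (by fun_prop : Continuous _).intervalIntegrable _ _
  have heq : (∫ φ in (0:ℝ)..(2*π), g φ)
      = Real.cos ((ℓ:ℝ)*t) * ∫ φ in (0:ℝ)..(2*π), g φ := by
    calc (∫ φ in (0:ℝ)..(2*π), g φ) = ∫ φ in (0:ℝ)..(2*π), g (φ + t) := hshift
    _ = Real.cos ((ℓ:ℝ)*t) * (∫ φ in (0:ℝ)..(2*π),
          Real.cos ((ℓ:ℝ)*φ) * Real.exp (c * Real.cos ((L:ℝ)*φ)))
        - Real.sin ((ℓ:ℝ)*t) * ∫ φ in (0:ℝ)..(2*π),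
          Real.sin ((ℓ:ℝ)*φ) * Real.exp (c * Real.cos ((L:ℝ)*φ)) := by
        simp only [hval]
        rw [intervalIntegral.integral_sub (hiC.const_mul _) (hiS.const_mul _),
          intervalIntegral.integral_const_mul, intervalIntegral.integral_const_mul]
    _ = Real.cos ((ℓ:ℝ)*t) * ∫ φ in (0:ℝ)..(2*π), g φ := by
        rw [integral_sin_mul_exp c L ℓ]
        simp [hg]
  have hcne : Real.cos ((ℓ:ℝ)*t) ≠ 1 := by
    intro hcos
    rcases (Real.cos_eq_one_iff _).mp hcos with ⟨n, hn⟩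
    have hLpos : (0:ℝ) < (L:ℝ) := by
      have : 0 < L := by omega
      exact_mod_cast this
    have hlt : (ℓ:ℝ)*t < 2*π := by
      rw [ht, ← mul_div_assoc, div_lt_iff₀ hLpos]
      nlinarith [Real.two_pi_pos, (by exact_mod_cast h2 : (ℓ:ℝ) < (L:ℝ))]
    have hpos : 0 < (ℓ:ℝ)*t := by
      apply mul_pos
      · exact_mod_cast h1
      · rw [ht]; positivity
    have hn0 : (0:ℝ) < (n:ℝ) * (2*π) := hn ▸ hpos
    have hn1 : 1 ≤ n := by
      by_contra hn1
      push_neg at hn1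
      have : (n:ℝ) ≤ 0 := by exact_mod_cast Int.lt_add_one_iff.mp hn1
      nlinarith [Real.two_pi_pos]
    have : (2*π:ℝ) ≤ (n:ℝ)*(2*π) := by
      have : (1:ℝ) ≤ (n:ℝ) := by exact_mod_cast hn1
      nlinarith [Real.two_pi_pos]
    rw [hn] at this
    linarith
  have hfac : (1 - Real.cos ((ℓ:ℝ)*t)) * ∫ φ in (0:ℝ)..(2*π), g φ = 0 := by
    linarith [heq]
  have := mul_eq_zero.mp hfac
  rcases this with h | h
  · exact absurd (by linarith : Real.cos ((ℓ:ℝ)*t) = 1) hcne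
  · exact h

lemma integral_exp_cos_nat (c : ℝ) {L : ℕ} (hL : 1 ≤ L) :
    ∫ φ in (0:ℝ)..(2*π), Real.exp (c * Real.cos ((L:ℝ)*φ)) = 2*π * besselI 0 c := by
  have h := integral_comp_nat_mul (f := fun u => Real.exp (c * Real.cos u))
    (by fun_prop) (fun x => by simp [Real.cos_add_two_pi]) hL
  rw [h]
  unfold besselI
  simp only [Nat.cast_zero, zero_mul, Real.cos_zero, mul_one]
  rw [← mul_assoc, mul_one_div, div_self Real.two_pi_pos.ne', one_mul]

lemma integral_cosL_mul_exp (c : ℝ) {L : ℕ} (hL : 1 ≤ L) :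
    ∫ φ in (0:ℝ)..(2*π), Real.cos ((L:ℝ)*φ) * Real.exp (c * Real.cos ((L:ℝ)*φ))
      = 2*π * besselI 1 c := by
  have h := integral_comp_nat_mul (f := fun u => Real.cos u * Real.exp (c * Real.cos u))
    (by fun_prop) (fun x => by simp [Real.cos_add_two_pi]) hL
  rw [h]
  unfold besselI
  simp only [Nat.cast_one, one_mul]
  rw [← mul_assoc, mul_one_div, div_self Real.two_pi_pos.ne', one_mul]
  exact intervalIntegral.integral_congr (fun x _ => mul_comm _ _)

/-- for a finite-mode potential with `a₁ > ⋯ > a_L > 0`, `κ > 2/a_L` and `r > 0`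
solving the Kuramoto fixed-point equation, the density
`π(θ) = exp(κ a_L r cos(Lθ))/I₀(κ a_L r)` is a nontrivial stationary solution. -/
theorem kuramoto_branch
    (L : ℕ) (hL : 1 ≤ L) (a : ℕ → ℝ)
    (hdec : ∀ i j : ℕ, 1 ≤ i → i < j → j ≤ L → a j < a i)
    (hposL : 0 < a L)
    (κ : ℝ) (hκ : 2 / a L < κ)
    (r : ℝ) (hr : 0 < r)
    (hfix : r = besselI 1 (κ * a L * r) / besselI 0 (κ * a L * r)) :
    let piF : ℝ → ℝ := fun θ => Real.exp (κ * a L * r * Real.cos ((L : ℝ) * θ))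
      / besselI 0 (κ * a L * r)
    (∀ θ : ℝ, 0 < piF θ) ∧
    (∀ θ : ℝ, piF (-θ) = piF θ) ∧
    Function.Periodic piF (2 * π) ∧
    ContDiff ℝ 1 piF ∧
    (1 / (2 * π)) * (∫ θ in (0:ℝ)..(2 * π), piF θ) = 1 ∧
    (∀ θ : ℝ, deriv piF θ = κ * deriv (circConv (Wfin L a) piF) θ * piF θ) ∧
    (∃ θ : ℝ, piF θ ≠ 1) := by
  intro piF
  have hL0 : (L : ℝ) ≠ 0 := Nat.cast_ne_zero.2 (by omega)
  have hκpos : 0 < κ := lt_trans (div_pos two_pos hposL) hκ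
  set c : ℝ := κ * a L * r with hc
  have hcpos : 0 < c := by
    rw [hc]
    exact mul_pos (mul_pos hκpos hposL) hr
  have hI0 : 0 < besselI 0 c := besselI_zero_pos c
  have hI0' : besselI 0 c ≠ 0 := hI0.ne'
  have hpiF : piF = fun θ => Real.exp (c * Real.cos ((L:ℝ)*θ)) / besselI 0 c := rfl
  have hI1 : besselI 1 c = r * besselI 0 c := by
    rw [hfix]
    field_simp
  -- convolution identity
  have hconv : circConv (Wfin L a) piF = fun θ => a L * r * Real.cos ((L:ℝ)*θ) := by
    funext θ
    rw [hpiF]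
    unfold circConv Wfin
    have step1 : ∀ φ : ℝ,
        (∑ ℓ ∈ Finset.Icc 1 L, a ℓ * Real.cos ((ℓ:ℝ)*(θ-φ)))
          * (Real.exp (c * Real.cos ((L:ℝ)*φ)) / besselI 0 c)
        = ∑ ℓ ∈ Finset.Icc 1 L,
            ((a ℓ * Real.cos ((ℓ:ℝ)*θ) / besselI 0 c)
              * (Real.cos ((ℓ:ℝ)*φ) * Real.exp (c * Real.cos ((L:ℝ)*φ)))
            + (a ℓ * Real.sin ((ℓ:ℝ)*θ) / besselI 0 c)
              * (Real.sin ((ℓ:ℝ)*φ) * Real.exp (c * Real.cos ((L:ℝ)*φ)))) := by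
      intro φ
      rw [Finset.sum_mul]
      refine Finset.sum_congr rfl fun ℓ _ => ?_
      rw [mul_sub, Real.cos_sub]
      field_simp
    simp only [step1]
    rw [intervalIntegral.integral_finset_sum]
    · have hterm : ∀ ℓ ∈ Finset.Icc 1 L,
          (∫ φ in (0:ℝ)..(2*π),
            ((a ℓ * Real.cos ((ℓ:ℝ)*θ) / besselI 0 c)
              * (Real.cos ((ℓ:ℝ)*φ) * Real.exp (c * Real.cos ((L:ℝ)*φ)))
            + (a ℓ * Real.sin ((ℓ:ℝ)*θ) / besselI 0 c)
              * (Real.sin ((ℓ:ℝ)*φ) * Real.exp (c * Real.cos ((L:ℝ)*φ)))))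
          = (a ℓ * Real.cos ((ℓ:ℝ)*θ) / besselI 0 c)
              * (∫ φ in (0:ℝ)..(2*π), Real.cos ((ℓ:ℝ)*φ) * Real.exp (c * Real.cos ((L:ℝ)*φ))) := by
        intro ℓ _
        have hiC : IntervalIntegrable
            (fun φ => Real.cos ((ℓ:ℝ)*φ) * Real.exp (c * Real.cos ((L:ℝ)*φ)))
            MeasureTheory.volume 0 (2*π) := (by fun_prop : Continuous _).intervalIntegrable _ _
        have hiS : IntervalIntegrable
            (fun φ => Real.sin ((ℓ:ℝ)*φ) * Real.exp (c * Real.cos ((L:ℝ)*φ)))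
            MeasureTheory.volume 0 (2*π) := (by fun_prop : Continuous _).intervalIntegrable _ _
        rw [intervalIntegral.integral_add (hiC.const_mul _) (hiS.const_mul _),
          intervalIntegral.integral_const_mul, intervalIntegral.integral_const_mul,
          integral_sin_mul_exp c L ℓ, mul_zero, add_zero]
      rw [Finset.sum_congr rfl hterm]
      rw [Finset.sum_eq_single_of_mem L (Finset.mem_Icc.2 ⟨hL, le_refl L⟩)]
      · rw [integral_cosL_mul_exp c hL, hI1]
        field_simp
      · intro ℓ hmem hne
        have hℓ : 1 ≤ ℓ ∧ ℓ ≤ L := Finset.mem_Icc.mp hmem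
        have hlt : ℓ < L := lt_of_le_of_ne hℓ.2 hne
        rw [integral_cos_mul_exp_eq_zero c hℓ.1 hlt, mul_zero]
    · intro ℓ _
      exact (by fun_prop : Continuous _).intervalIntegrable _ _
  refine ⟨?_, ?_, ?_, ?_, ?_, ?_, ?_⟩
  · intro θ
    exact div_pos (Real.exp_pos _) hI0
  · intro θ
    show Real.exp (c * Real.cos ((L:ℝ)*(-θ))) / besselI 0 c
      = Real.exp (c * Real.cos ((L:ℝ)*θ)) / besselI 0 c
    rw [mul_neg, Real.cos_neg]
  · intro θ
    show Real.exp (c * Real.cos ((L:ℝ)*(θ + 2*π))) / besselI 0 c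
      = Real.exp (c * Real.cos ((L:ℝ)*θ)) / besselI 0 c
    rw [show (L:ℝ)*(θ + 2*π) = (L:ℝ)*θ + (L:ℝ)*(2*π) by ring,
      Real.cos_add_nat_mul_two_pi]
  · show ContDiff ℝ 1 fun θ => Real.exp (c * Real.cos ((L:ℝ)*θ)) / besselI 0 c
    exact (ContDiff.exp (contDiff_const.mul
      (Real.contDiff_cos.comp (contDiff_const.mul contDiff_id)))).div_const _
  · show (1 / (2*π)) * (∫ θ in (0:ℝ)..(2*π),
      Real.exp (c * Real.cos ((L:ℝ)*θ)) / besselI 0 c) = 1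
    rw [intervalIntegral.integral_div, integral_exp_cos_nat c hL]
    field_simp
  · intro θ
    rw [hconv]
    have hd1 : HasDerivAt (fun θ : ℝ => (L:ℝ)*θ) (L:ℝ) θ := by
      simpa using (hasDerivAt_id θ).const_mul (L:ℝ)
    have hdcos : HasDerivAt (fun θ : ℝ => Real.cos ((L:ℝ)*θ))
        (-Real.sin ((L:ℝ)*θ) * (L:ℝ)) θ := hd1.cos
    have hdRHS : deriv (fun θ : ℝ => a L * r * Real.cos ((L:ℝ)*θ)) θ
        = a L * r * (-Real.sin ((L:ℝ)*θ) * (L:ℝ)) := (hdcos.const_mul (a L * r)).deriv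
    have hdpi : deriv piF θ
        = Real.exp (c * Real.cos ((L:ℝ)*θ)) * (c * (-Real.sin ((L:ℝ)*θ) * (L:ℝ)))
          / besselI 0 c := by
      rw [hpiF]
      exact (((hdcos.const_mul c).exp).div_const _).deriv
    rw [hdpi, hdRHS]
    simp only [hpiF]
    rw [hc]
    ring
  · by_contra hcon
    push_neg at hcon
    have h0 := hcon 0
    have h1 := hcon (π / (L:ℝ))
    rw [hpiF] at h0 h1
    simp only at h0 h1
    rw [mul_zero, Real.cos_zero, mul_one] at h0
    rw [mul_div_cancel₀ _ hL0, Real.cos_pi, mul_neg_one] at h1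
    have e0 : Real.exp c = besselI 0 c := by
      field_simp [hI0'] at h0
      exact h0
    have e1 : Real.exp (-c) = besselI 0 c := by
      field_simp [hI0'] at h1
      exact h1
    have : c = -c := Real.exp_injective (e0.trans e1.symm)
    linarith
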